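/- The Sylvester tensor equation A *_M X + X *_N C = D is inconsistent if and only if there exists an iteration index k₀ in Algorithm 3.1 such that R^(k₀) ≠ 0 and P^(k₀) = 0. -/

import Mathlib

open scoped BigOperators

/-- Multi-index of shape `I₁ × ⋯ × I_M`. -/
abbrev MIdx {M : ℕ} (I : Fin M → ℕ) := (k : Fin M) → Fin (I k)

/-- Einstein product: contraction over the shared (middle) index group. -/
def eprod {α β γ : Type*} [Fintype β] (A : α → β → ℝ) (B : β → γ → ℝ) :
    α → γ → ℝ := fun a c => ∑ b, A a b * B b c

/-- Generalized trace of a square tensor. -/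
def ttrace {α : Type*} [Fintype α] (A : α → α → ℝ) : ℝ := ∑ a, A a a

/-- Transpose: swaps the two index groups. -/
def ttr {α β : Type*} (A : α → β → ℝ) : β → α → ℝ := fun b a => A a b

/-- Frobenius inner product ⟨X, Y⟩ = tr(Yᵀ * X). -/
noncomputable def frobInner {α β : Type*} [Fintype α] [Fintype β]
    (X Y : α → β → ℝ) : ℝ := ttrace (eprod (ttr Y) X)

/-- Frobenius norm of a tensor. -/
noncomputable def tnorm {α β : Type*} [Fintype α] [Fintype β]
    (X : α → β → ℝ) : ℝ := Real.sqrt (frobInner X X)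

/-- Kronecker product of tensors (blockwise). -/
def kron {α β γ δ : Type*} (A : α → β → ℝ) (B : γ → δ → ℝ) :
    α × γ → β × δ → ℝ := fun p q => A p.1 q.1 * B p.2 q.2

/-- Vec: lines up the row-group slices into a single column index. -/
def tVec {α β : Type*} (X : α → β → ℝ) : β × α → ℝ := fun p => X p.2 p.1

/-- Einstein product of a tensor with a vectorized tensor. -/
def evec {α β : Type*} [Fintype β] (A : α → β → ℝ) (x : β → ℝ) : α → ℝ :=
  fun a => ∑ b, A a b * x b

/-- Identity tensor. -/
def idT {α : Type*} [DecidableEq α] : α → α → ℝ := fun a b => if a = b then 1 else 0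

set_option linter.unusedSectionVars false
section helpers
variable {α β γ : Type*} [Fintype α] [Fintype β] [Fintype γ]

lemma frobInner_eq (X Y : α → β → ℝ) :
    frobInner X Y = ∑ a, ∑ b, X a b * Y a b := by
  unfold frobInner ttrace eprod ttr
  rw [Finset.sum_comm]
  exact Finset.sum_congr rfl fun a _ => Finset.sum_congr rfl fun b _ => by ring

lemma frobInner_comm (X Y : α → β → ℝ) : frobInner X Y = frobInner Y X := by
  simp only [frobInner_eq]
  exact Finset.sum_congr rfl fun a _ => Finset.sum_congr rfl fun b _ => by ring

lemma frobInner_add_left (X Y Z : α → β → ℝ) :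
    frobInner (X + Y) Z = frobInner X Z + frobInner Y Z := by
  simp [frobInner_eq, add_mul, Finset.sum_add_distrib]

lemma frobInner_add_right (X Y Z : α → β → ℝ) :
    frobInner X (Y + Z) = frobInner X Y + frobInner X Z := by
  rw [frobInner_comm, frobInner_add_left, frobInner_comm Y X, frobInner_comm Z X]

lemma frobInner_smul_left (c : ℝ) (X Z : α → β → ℝ) :
    frobInner (c • X) Z = c * frobInner X Z := by
  simp [frobInner_eq, Finset.mul_sum, mul_assoc]

lemma frobInner_smul_right (c : ℝ) (X Z : α → β → ℝ) :
    frobInner X (c • Z) = c * frobInner X Z := by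
  rw [frobInner_comm, frobInner_smul_left, frobInner_comm]

lemma frobInner_sub_left (X Y Z : α → β → ℝ) :
    frobInner (X - Y) Z = frobInner X Z - frobInner Y Z := by
  simp [frobInner_eq, sub_mul, Finset.sum_sub_distrib]

lemma frobInner_sub_right (X Y Z : α → β → ℝ) :
    frobInner X (Y - Z) = frobInner X Y - frobInner X Z := by
  rw [frobInner_comm, frobInner_sub_left, frobInner_comm Y X, frobInner_comm Z X]

lemma frobInner_zero_right (X : α → β → ℝ) : frobInner X 0 = 0 := by
  simp [frobInner_eq]

lemma frobInner_self_nonneg (X : α → β → ℝ) : 0 ≤ frobInner X X := by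
  rw [frobInner_eq]
  exact Finset.sum_nonneg fun a _ => Finset.sum_nonneg fun b _ => mul_self_nonneg _

lemma frobInner_self_eq_zero {X : α → β → ℝ} (h : frobInner X X = 0) : X = 0 := by
  rw [frobInner_eq] at h
  funext x y
  have h1 : ∀ a ∈ Finset.univ, (0:ℝ) ≤ ∑ b, X a b * X a b :=
    fun a _ => Finset.sum_nonneg fun b _ => mul_self_nonneg _
  have h2 := (Finset.sum_eq_zero_iff_of_nonneg h1).mp h x (Finset.mem_univ x)
  have h3 := (Finset.sum_eq_zero_iff_of_nonneg
    (fun b _ => mul_self_nonneg (X x b))).mp h2 y (Finset.mem_univ y)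
  have := mul_self_eq_zero.mp h3
  simpa using this

lemma frobInner_self_ne_zero {X : α → β → ℝ} (h : X ≠ 0) :
    frobInner X X ≠ 0 := fun h0 => h (frobInner_self_eq_zero h0)

lemma sum_comm₃ {f : α → β → γ → ℝ} :
    ∑ a, ∑ b, ∑ c, f a b c = ∑ c, ∑ b, ∑ a, f a b c := by
  calc ∑ a, ∑ b, ∑ c, f a b c
      = ∑ a, ∑ c, ∑ b, f a b c := Finset.sum_congr rfl fun a _ => Finset.sum_comm
    _ = ∑ c, ∑ a, ∑ b, f a b c := Finset.sum_comm
    _ = ∑ c, ∑ b, ∑ a, f a b c := Finset.sum_congr rfl fun c _ => Finset.sum_comm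

lemma frobInner_eprod_left (A : α → γ → ℝ) (X : γ → β → ℝ) (Y : α → β → ℝ) :
    frobInner (eprod A X) Y = frobInner X (eprod (ttr A) Y) := by
  simp only [frobInner_eq, eprod, ttr, Finset.sum_mul, Finset.mul_sum]
  rw [sum_comm₃]
  exact Finset.sum_congr rfl fun c _ => Finset.sum_congr rfl fun b _ =>
    Finset.sum_congr rfl fun a _ => by ring

lemma frobInner_eprod_right (X : α → γ → ℝ) (C : γ → β → ℝ) (Y : α → β → ℝ) :
    frobInner (eprod X C) Y = frobInner X (eprod Y (ttr C)) := by
  simp only [frobInner_eq, eprod, ttr, Finset.sum_mul, Finset.mul_sum]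
  refine Finset.sum_congr rfl fun a _ => ?_
  rw [Finset.sum_comm]
  exact Finset.sum_congr rfl fun c _ => Finset.sum_congr rfl fun b _ => by ring

lemma eprod_add_right (A : α → γ → ℝ) (X Y : γ → β → ℝ) :
    eprod A (X + Y) = eprod A X + eprod A Y := by
  funext a c; simp [eprod, mul_add, Finset.sum_add_distrib]

lemma eprod_sub_right (A : α → γ → ℝ) (X Y : γ → β → ℝ) :
    eprod A (X - Y) = eprod A X - eprod A Y := by
  funext a c; simp [eprod, mul_sub, Finset.sum_sub_distrib]

lemma eprod_smul_right (A : α → γ → ℝ) (r : ℝ) (X : γ → β → ℝ) :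
    eprod A (r • X) = r • eprod A X := by
  funext a c; simp [eprod, Finset.mul_sum]; exact Finset.sum_congr rfl fun b _ => by ring

lemma eprod_add_left (X Y : α → γ → ℝ) (C : γ → β → ℝ) :
    eprod (X + Y) C = eprod X C + eprod Y C := by
  funext a c; simp [eprod, add_mul, Finset.sum_add_distrib]

lemma eprod_sub_left (X Y : α → γ → ℝ) (C : γ → β → ℝ) :
    eprod (X - Y) C = eprod X C - eprod Y C := by
  funext a c; simp [eprod, sub_mul, Finset.sum_sub_distrib]

lemma eprod_smul_left (r : ℝ) (X : α → γ → ℝ) (C : γ → β → ℝ) :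
    eprod (r • X) C = r • eprod X C := by
  funext a c; simp [eprod, Finset.mul_sum]; exact Finset.sum_congr rfl fun b _ => by ring

end helpers


theorem inconsistency_criterion {M N : ℕ} (I : Fin M → ℕ) (J : Fin N → ℕ)
(A : MIdx I → MIdx I → ℝ) (C : MIdx J → MIdx J → ℝ)
    (D : MIdx I → MIdx J → ℝ)
    (X R P : ℕ → MIdx I → MIdx J → ℝ)
    (hR : ∀ k, 1 ≤ k → R k = D - (eprod A (X k) + eprod (X k) C))
    (hP1 : P 1 = eprod (ttr A) (R 1) + eprod (R 1) (ttr C))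
    (hX : ∀ k, 1 ≤ k →
      X (k + 1) = X k + (frobInner (R k) (R k) / frobInner (P k) (P k)) • P k)
    (hP : ∀ k, 1 ≤ k →
      P (k + 1) = eprod (ttr A) (R (k + 1)) + eprod (R (k + 1)) (ttr C)
        + (frobInner (R (k + 1)) (R (k + 1)) / frobInner (R k) (R k)) • P k) :
    (¬ ∃ Xs : MIdx I → MIdx J → ℝ, eprod A Xs + eprod Xs C = D) ↔
      ∃ k, 1 ≤ k ∧ R k ≠ 0 ∧ P k = 0 := by
  classical
  have hadj : ∀ Y Z : MIdx I → MIdx J → ℝ,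
      frobInner (eprod A Y + eprod Y C) Z
        = frobInner Y (eprod (ttr A) Z + eprod Z (ttr C)) := by
    intro Y Z
    rw [frobInner_add_left, frobInner_add_right, frobInner_eprod_left,
      frobInner_eprod_right]
  have hRrec : ∀ k, 1 ≤ k → R (k+1)
      = R k - (frobInner (R k) (R k) / frobInner (P k) (P k)) •
          (eprod A (P k) + eprod (P k) C) := by
    intro k hk
    rw [hR (k+1) (by omega), hX k hk, hR k hk,
      eprod_add_right, eprod_smul_right, eprod_add_left, eprod_smul_left]
    funext u v
    simp only [Pi.sub_apply, Pi.add_apply, Pi.smul_apply, smul_eq_mul]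
    ring
  have hLsol : ∀ (Xs : MIdx I → MIdx J → ℝ), eprod A Xs + eprod Xs C = D →
      ∀ k, 1 ≤ k → eprod A (Xs - X k) + eprod (Xs - X k) C = R k := by
    intro Xs hXs k hk
    rw [eprod_sub_right, eprod_sub_left, hR k hk]
    funext u v
    have h1 := congrFun (congrFun hXs u) v
    simp only [Pi.add_apply] at h1
    simp only [Pi.sub_apply, Pi.add_apply]
    linarith
  have key : ∀ (Xs : MIdx I → MIdx J → ℝ), eprod A Xs + eprod Xs C = D →
      ∀ k, 1 ≤ k → frobInner (Xs - X k) (P k) = frobInner (R k) (R k) := by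
    intro Xs hXs k hk
    induction k, hk using Nat.le_induction with
    | base =>
      rw [hP1, ← hadj, hLsol Xs hXs 1 le_rfl]
    | succ k hk ih =>
      rw [hP k hk, frobInner_add_right, frobInner_smul_right,
        ← hadj, hLsol Xs hXs (k+1) (by omega)]
      have h2 : frobInner (Xs - X (k+1)) (P k)
          = frobInner (R k) (R k)
            - (frobInner (R k) (R k) / frobInner (P k) (P k))
              * frobInner (P k) (P k) := by
        rw [hX k hk, sub_add_eq_sub_sub, frobInner_sub_left, frobInner_smul_left, ih]
      by_cases hPk : P k = 0
      · have h0 : frobInner (R k) (R k) = 0 := by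
          rw [← ih, hPk, frobInner_zero_right]
        rw [h2, h0]
        simp
      · rw [h2, div_mul_cancel₀ _ (frobInner_self_ne_zero hPk)]
        simp
  constructor
  · intro hno
    by_contra hcon
    push_neg at hcon
    have hRne : ∀ k, 1 ≤ k → R k ≠ 0 := by
      intro k hk h0
      apply hno
      refine ⟨X k, ?_⟩
      have h := hR k hk
      rw [h0] at h
      exact (sub_eq_zero.mp h.symm).symm
    have hPne : ∀ k, 1 ≤ k → P k ≠ 0 := fun k hk => hcon k hk (hRne k hk)
    have hRip : ∀ k, 1 ≤ k → frobInner (R k) (R k) ≠ 0 :=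
      fun k hk => frobInner_self_ne_zero (hRne k hk)
    have hPip : ∀ k, 1 ≤ k → frobInner (P k) (P k) ≠ 0 :=
      fun k hk => frobInner_self_ne_zero (hPne k hk)
    have ortho : ∀ j i, 1 ≤ i → i < j →
        frobInner (R i) (R j) = 0 ∧ frobInner (P i) (P j) = 0 := by
      intro j
      induction j with
      | zero => intro i h1 h2; omega
      | succ k ih =>
        intro i hi hik'
        have hik : i ≤ k := by omega
        have hk : 1 ≤ k := by omega
        have hRpart : ∀ i', 1 ≤ i' → i' ≤ k →
            frobInner (R i') (R (k+1)) = 0 := by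
          intro i' h1 h2
          rw [hRrec k hk, frobInner_sub_right, frobInner_smul_right,
            frobInner_comm (R i') (eprod A (P k) + eprod (P k) C), hadj (P k) (R i')]
          rcases Nat.lt_or_ge i' 2 with hlt2 | hge2
          · have hi1 : i' = 1 := by omega
            subst hi1
            rw [← hP1]
            rcases eq_or_lt_of_le h2 with heq | hlt
            · subst heq
              rw [div_mul_cancel₀ _ (hPip 1 le_rfl), sub_self]
            · rw [(ih 1 le_rfl hlt).1, frobInner_comm (P k) (P 1),
                (ih 1 le_rfl hlt).2]
              simp
          · obtain ⟨m, rfl⟩ : ∃ m, i' = m + 1 := ⟨i' - 1, by omega⟩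
            have hm : 1 ≤ m := by omega
            have hLt : eprod (ttr A) (R (m+1)) + eprod (R (m+1)) (ttr C)
                = P (m+1) - (frobInner (R (m+1)) (R (m+1))
                    / frobInner (R m) (R m)) • P m := by
              rw [hP m hm]
              funext u v
              simp only [Pi.add_apply, Pi.sub_apply, Pi.smul_apply, smul_eq_mul]
              ring
            rw [hLt, frobInner_sub_right, frobInner_smul_right]
            rcases eq_or_lt_of_le h2 with heq | hlt
            · subst heq
              rw [frobInner_comm (P (m+1)) (P m), (ih m hm (by omega)).2]
              rw [mul_zero, sub_zero, div_mul_cancel₀ _ (hPip (m+1) (by omega)),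
                sub_self]
            · rw [(ih (m+1) (by omega) hlt).1,
                frobInner_comm (P k) (P (m+1)), (ih (m+1) (by omega) hlt).2,
                frobInner_comm (P k) (P m), (ih m hm (by omega)).2]
              simp
        have hPpart : ∀ i', 1 ≤ i' → i' ≤ k →
            frobInner (P i') (P (k+1)) = 0 := by
          intro i' h1 h2
          rw [hP k hk, frobInner_add_right, frobInner_smul_right,
            ← hadj (P i') (R (k+1))]
          have hLP : eprod A (P i') + eprod (P i') C
              = (frobInner (P i') (P i') / frobInner (R i') (R i')) •
                  (R i' - R (i'+1)) := by
            rw [hRrec i' h1]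
            funext u v
            simp only [Pi.add_apply, Pi.sub_apply, Pi.smul_apply, smul_eq_mul]
            field_simp [hRip i' h1, hPip i' h1]
            ring
          rw [hLP, frobInner_smul_left, frobInner_sub_left]
          rcases eq_or_lt_of_le h2 with heq | hlt
          · subst heq
            rw [hRpart i' h1 le_rfl]
            field_simp [hRip i' h1, hPip i' h1]
            ring
          · rw [hRpart i' h1 (le_of_lt hlt), hRpart (i'+1) (by omega) hlt,
              (ih i' h1 hlt).2]
            simp
        exact ⟨hRpart i hi hik, hPpart i hi hik⟩
    -- infinitely many pairwise-orthogonal nonzero vectors: contradiction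
    let v : ℕ → EuclideanSpace ℝ (MIdx I × MIdx J) :=
      fun n => WithLp.toLp 2 (fun p : MIdx I × MIdx J => R (n+1) p.1 p.2)
    have hvinner : ∀ n m : ℕ,
        (inner ℝ (v n) (v m) : ℝ) = frobInner (R (n+1)) (R (m+1)) := by
      intro n m
      rw [frobInner_eq]
      simp [v, PiLp.inner_apply, RCLike.inner_apply, Fintype.sum_prod_type,
        mul_comm]
    have hvne : ∀ n, v n ≠ 0 := by
      intro n hvz
      apply hRne (n+1) (by omega)
      funext a b
      have := congrArg (fun w => w (a, b)) hvz
      simpa [v] using this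
    have hvo : Pairwise fun n m => (inner ℝ (v n) (v m) : ℝ) = 0 := by
      intro n m hnm
      rw [hvinner]
      rcases Nat.lt_or_ge n m with h | h
      · exact (ortho (m+1) (n+1) (by omega) (by omega)).1
      · have hmn : m < n := by omega
        rw [frobInner_comm]
        exact (ortho (n+1) (m+1) (by omega) (by omega)).1
    exact Module.Finite.not_linearIndependent_of_infinite v
      (linearIndependent_of_ne_zero_of_inner_eq_zero hvne hvo)
  · rintro ⟨k0, hk0, hRne0, hPz⟩ ⟨Xs, hXs⟩
    have h := key Xs hXs k0 hk0
    rw [hPz, frobInner_zero_right] at h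
    exact hRne0 (frobInner_self_eq_zero h.symm)
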